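/- For every finite tree T and vertex r, \sum_{v \in V(T)} (H_r(v) + d(r,v)) = 2 W(T), where W(T) = \sum_{x,y \in V(T)} d(x,y) (each unordered pair counted once) is the Wiener index of T, i.e. CC_r(T) + \sum_{v} d(r,v) = 2W(T). -/

import Mathlib

open Finset

variable {V : Type*} [Fintype V] [DecidableEq V]

/-- One-step transition probability of simple random walk on `G`:
from `x`, move to a uniformly random neighbour. -/
noncomputable def SimpleGraph.step (G : SimpleGraph V) [DecidableRel G.Adj] (x y : V) : ℝ :=
  if G.Adj x y then ((G.degree x : ℝ))⁻¹ else 0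

/-- `G.firstHitProb t r x`: probability that the first visit to `x` of simple random walk
started at `r` occurs at time `t` (time `0` counts as a visit). -/
noncomputable def SimpleGraph.firstHitProb (G : SimpleGraph V) [DecidableRel G.Adj] :
    ℕ → V → V → ℝ
  | 0, r, x => if r = x then 1 else 0
  | (t+1), r, x => if r = x then 0 else ∑ z, G.step r z * G.firstHitProb t z x

/-- `G.hitTime r x`: expected hitting time `H_r(x)` of `x` for simple random walk from `r`. -/
noncomputable def SimpleGraph.hitTime (G : SimpleGraph V) [DecidableRel G.Adj] (r x : V) : ℝ :=
  ∑' t : ℕ, (t : ℝ) * G.firstHitProb t r x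

/-- `G.firstInProb t r x y`: probability that the first visit of the walk from `r`
to the set `{x, y}` occurs at time `t` and is a visit to `x` (time `0` counts). -/
noncomputable def SimpleGraph.firstInProb (G : SimpleGraph V) [DecidableRel G.Adj] :
    ℕ → V → V → V → ℝ
  | 0, r, x, _ => if r = x then 1 else 0
  | (t+1), r, x, y => if r = x ∨ r = y then 0 else ∑ z, G.step r z * G.firstInProb t z x y

/-- `G.probBefore r x y` = `p_r(x<y)`: probability that random walk from `r` visits `x`
strictly before `y` (visiting `x` at time `0` counts, so `p_r(r<y) = 1`). -/
noncomputable def SimpleGraph.probBefore (G : SimpleGraph V) [DecidableRel G.Adj]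
    (r x y : V) : ℝ :=
  ∑' t : ℕ, G.firstInProb t r x y

/-- `G.escProb x y` = `p_{xy}`: probability that random walk from `x` visits `y` before
returning to `x` (i.e. before visiting `x` again at a positive time). -/
noncomputable def SimpleGraph.escProb (G : SimpleGraph V) [DecidableRel G.Adj] (x y : V) : ℝ :=
  ∑ z, G.step x z * G.probBefore z y x

/-- `G.avoidProb y t z x`: probability that the walk started at `z` is at `x` at time `t`
and has not visited `y` at any time `≤ t`. -/
noncomputable def SimpleGraph.avoidProb (G : SimpleGraph V) [DecidableRel G.Adj] (y : V) :
    ℕ → V → V → ℝ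
  | 0, z, x => if z = y then 0 else if z = x then 1 else 0
  | (t+1), z, x => if z = y then 0 else ∑ w, G.step z w * G.avoidProb y t w x

/-- `G.visitsBefore x y` = `V_x^{†y}`: expected number of visits to `x` (counting time `0`)
of the walk started at `x` strictly before the first visit to `y`. -/
noncomputable def SimpleGraph.visitsBefore (G : SimpleGraph V) [DecidableRel G.Adj]
    (x y : V) : ℝ :=
  ∑' t : ℕ, G.avoidProb y t x x

/-- `G.coverDist r t (v, S)`: probability that the walk started at `r` is at `v` at time `t`
with `S` being the set of vertices visited so far. -/
noncomputable def SimpleGraph.coverDist (G : SimpleGraph V) [DecidableRel G.Adj] (r : V) :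
    ℕ → V × Finset V → ℝ
  | 0, p => if p = (r, {r}) then 1 else 0
  | (t+1), p => ∑ q : V × Finset V,
      (if p.2 = insert p.1 q.2 then G.step q.1 p.1 else 0) * G.coverDist r t q

/-- `G.coverTime r` = `CT_r(G)`: the expected number of steps of a cover tour of the walk
started at `r` (the walk stops once all vertices have been visited). -/
noncomputable def SimpleGraph.coverTime (G : SimpleGraph V) [DecidableRel G.Adj] (r : V) : ℝ :=
  ∑' t : ℕ, ∑ p : V × Finset V, if p.2 ≠ Finset.univ then G.coverDist r t p else 0

/-- `G.coverCost r` = `cc_r(G)`: the expected total cost of a cover tour from `r`, where a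
step taken when `k` vertices other than `r` have been visited so far costs `1 - k / n`,
with `n = |V| - 1`. -/
noncomputable def SimpleGraph.coverCost (G : SimpleGraph V) [DecidableRel G.Adj] (r : V) : ℝ :=
  ∑' t : ℕ, ∑ p : V × Finset V,
    if p.2 ≠ Finset.univ then
      G.coverDist r t p * (1 - ((p.2.erase r).card : ℝ) / ((Fintype.card V : ℝ) - 1))
    else 0

/-- `G.chargeD r x` = `D(x)`: the expected total charge departing from `x`, for the particle
started at `r` with charge `1` whose charge drops by `1/n` at each first visit to a vertex
other than `r` (it stops when the charge reaches `0`, i.e. when all vertices are covered). -/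
noncomputable def SimpleGraph.chargeD (G : SimpleGraph V) [DecidableRel G.Adj] (r x : V) : ℝ :=
  ∑' t : ℕ, ∑ S : Finset V,
    if S ≠ Finset.univ then
      G.coverDist r t (x, S) * (1 - ((S.erase r).card : ℝ) / ((Fintype.card V : ℝ) - 1))
    else 0

/-- The path graph on vertices `0, 1, …, n`, consecutive integers being adjacent. -/
def pathG (n : ℕ) : SimpleGraph (Fin (n+1)) where
  Adj i j := (i : ℕ) + 1 = j ∨ (j : ℕ) + 1 = i
  symm := ⟨fun i j h => h.symm⟩
  loopless := ⟨fun i h => by rcases h with h | h <;> omega⟩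

instance (n : ℕ) : DecidableRel (pathG n).Adj :=
  fun i j => inferInstanceAs (Decidable ((i : ℕ) + 1 = j ∨ (j : ℕ) + 1 = i))

/-- The star graph with center `0` and `n` leaves `1, …, n`. -/
def starG (n : ℕ) : SimpleGraph (Fin (n+1)) where
  Adj i j := i ≠ j ∧ (i = 0 ∨ j = 0)
  symm := ⟨fun i j h => ⟨h.1.symm, h.2.symm⟩⟩
  loopless := ⟨fun i h => h.1 rfl⟩

instance (n : ℕ) : DecidableRel (starG n).Adj :=
  fun i j => inferInstanceAs (Decidable (i ≠ j ∧ (i = 0 ∨ j = 0)))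
/-- The Wiener index of a graph: the sum of distances over all unordered pairs of vertices
(the diagonal terms vanish, so it is half the sum over ordered pairs). -/
noncomputable def wienerIndex {V : Type*} [Fintype V] (T : SimpleGraph V) : ℝ :=
  (∑ x : V, ∑ y : V, (T.dist x y : ℝ)) / 2

section TreeHitting

variable {V : Type*} [Fintype V] [DecidableEq V]
variable (G : SimpleGraph V) [DecidableRel G.Adj]

open SimpleGraph Finset

lemma step_nonneg (r z : V) : 0 ≤ G.step r z := by
  unfold SimpleGraph.step; split_ifs <;> positivity

lemma step_eq_zero {r z : V} (h : ¬ G.Adj r z) : G.step r z = 0 := if_neg h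

lemma step_pos {r z : V} (h : G.Adj r z) : 0 < G.step r z := by
  rw [SimpleGraph.step, if_pos h]
  have : 0 < G.degree r := G.degree_pos_iff_exists_adj r |>.mpr ⟨z, h⟩
  positivity

lemma sum_step {r : V} (h : 0 < G.degree r) : ∑ z, G.step r z = 1 := by
  have h1 : ∑ z, G.step r z = ∑ z ∈ G.neighborFinset r, ((G.degree r : ℝ))⁻¹ := by
    rw [neighborFinset_eq_filter, Finset.sum_filter]
    rfl
  rw [h1, Finset.sum_const, G.card_neighborFinset_eq_degree, nsmul_eq_mul,
    mul_inv_cancel₀ (by exact_mod_cast h.ne')]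

lemma exists_closer (hc : G.Connected) {r v : V} (hrv : r ≠ v) :
    ∃ z, G.Adj r z ∧ G.dist z v + 1 = G.dist r v := by
  obtain ⟨p, hp, hl⟩ := hc.exists_path_of_dist r v
  obtain ⟨z, hadj, q, rfl⟩ := SimpleGraph.Walk.exists_eq_cons_of_ne hrv p
  refine ⟨z, hadj, ?_⟩
  have h1 : G.dist z v ≤ q.length := SimpleGraph.dist_le q
  have h2 : G.dist r v ≤ G.dist r z + G.dist z v := hc.dist_triangle
  have h3 : G.dist r z = 1 := SimpleGraph.dist_eq_one_iff_adj.mpr hadj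
  have h4 : q.length + 1 = G.dist r v := by
    simpa [SimpleGraph.Walk.length_cons] using hl
  omega

lemma degree_pos (hc : G.Connected) (hV : 1 < Fintype.card V) (r : V) : 0 < G.degree r := by
  obtain ⟨v, hv⟩ := Fintype.exists_ne_of_one_lt_card hV r
  obtain ⟨z, hz, -⟩ := exists_closer G hc hv.symm
  exact G.degree_pos_iff_exists_adj r |>.mpr ⟨z, hz⟩

end TreeHitting
set_option linter.unusedSectionVars false

section TreeHitting2

variable {V : Type*} [Fintype V] [DecidableEq V]
variable (G : SimpleGraph V) [DecidableRel G.Adj]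

open SimpleGraph Finset

/-- Survival probability: walk from `z` has avoided `x` up to time `t`. -/
noncomputable def Qf (x : V) (t : ℕ) (z : V) : ℝ := ∑ w, G.avoidProb x t z w

lemma avoidProb_nonneg (x : V) : ∀ (t : ℕ) (z w : V), 0 ≤ G.avoidProb x t z w := by
  intro t
  induction t with
  | zero => intro z w; simp only [SimpleGraph.avoidProb]; split_ifs <;> norm_num
  | succ t ih =>
    intro z w
    simp only [SimpleGraph.avoidProb]
    split_ifs with h
    · exact le_rfl
    · exact Finset.sum_nonneg fun u _ => mul_nonneg (step_nonneg G z u) (ih u w)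

lemma avoidProb_self (x : V) (t : ℕ) (w : V) : G.avoidProb x t x w = 0 := by
  cases t <;> simp [SimpleGraph.avoidProb]

lemma Qf_nonneg (x : V) (t : ℕ) (z : V) : 0 ≤ Qf G x t z :=
  Finset.sum_nonneg fun w _ => avoidProb_nonneg G x t z w

lemma Qf_zero (x z : V) : Qf G x 0 z = if z = x then 0 else 1 := by
  unfold Qf
  split_ifs with h
  · subst h; simp [avoidProb_self]
  · rw [Finset.sum_eq_single z]
    · simp [SimpleGraph.avoidProb, h]
    · intro w _ hw; simp [SimpleGraph.avoidProb, h, hw.symm]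
    · simp
lemma Qf_succ (x z : V) (t : ℕ) :
    Qf G x (t+1) z = if z = x then 0 else ∑ u, G.step z u * Qf G x t u := by
  unfold Qf
  split_ifs with h
  · simp [avoidProb_self, h]
  · simp only [SimpleGraph.avoidProb, if_neg h]
    rw [Finset.sum_comm]
    simp [Finset.mul_sum]

lemma Qf_self (x : V) (t : ℕ) : Qf G x t x = 0 := by
  unfold Qf; simp [avoidProb_self]

lemma Qf_le_one (hc : G.Connected) (hV : 1 < Fintype.card V) (x : V) :
    ∀ (t : ℕ) (z : V), Qf G x t z ≤ 1 := by
  intro t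
  induction t with
  | zero => intro z; rw [Qf_zero]; split_ifs <;> norm_num
  | succ t ih =>
    intro z
    rw [Qf_succ]
    split_ifs with h
    · norm_num
    · calc ∑ u, G.step z u * Qf G x t u ≤ ∑ u, G.step z u * 1 :=
            Finset.sum_le_sum fun u _ => mul_le_mul_of_nonneg_left (ih u) (step_nonneg G z u)
        _ = 1 := by simpa using sum_step G (degree_pos G hc hV z)

lemma Qf_anti_succ (hc : G.Connected) (hV : 1 < Fintype.card V) (x : V) :
    ∀ (t : ℕ) (z : V), Qf G x (t+1) z ≤ Qf G x t z := by
  intro t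
  induction t with
  | zero =>
    intro z
    rw [Qf_succ, Qf_zero]
    split_ifs with h
    · exact le_rfl
    · calc ∑ u, G.step z u * Qf G x 0 u ≤ ∑ u, G.step z u * 1 :=
            Finset.sum_le_sum fun u _ => mul_le_mul_of_nonneg_left
              (Qf_le_one G hc hV x 0 u) (step_nonneg G z u)
        _ = 1 := by simpa using sum_step G (degree_pos G hc hV z)
  | succ t ih =>
    intro z
    rw [Qf_succ, Qf_succ]
    split_ifs with h
    · exact le_rfl
    · exact Finset.sum_le_sum fun u _ => mul_le_mul_of_nonneg_left (ih u) (step_nonneg G z u)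

lemma Qf_anti (hc : G.Connected) (hV : 1 < Fintype.card V) (x : V) {s t : ℕ} (h : s ≤ t)
    (z : V) : Qf G x t z ≤ Qf G x s z := by
  induction t with
  | zero => simp_all
  | succ t ih =>
    rcases Nat.lt_or_ge s (t+1) with h' | h'
    · exact (Qf_anti_succ G hc hV x t z).trans (ih (by omega))
    · have : s = t + 1 := le_antisymm h h'
      subst this; exact le_rfl

end TreeHitting2
section TreeHitting3

variable {V : Type*} [Fintype V] [DecidableEq V]
variable (G : SimpleGraph V) [DecidableRel G.Adj]

open SimpleGraph Finset

lemma fhp_zero (r x : V) : G.firstHitProb 0 r x = if r = x then 1 else 0 := rfl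

lemma fhp_succ (t : ℕ) (r x : V) :
    G.firstHitProb (t+1) r x = if r = x then 0 else ∑ z, G.step r z * G.firstHitProb t z x := rfl

lemma fhp_nonneg (x : V) : ∀ (t : ℕ) (r : V), 0 ≤ G.firstHitProb t r x := by
  intro t
  induction t with
  | zero => intro r; rw [fhp_zero]; split_ifs <;> norm_num
  | succ t ih =>
    intro r; rw [fhp_succ]
    split_ifs with h
    · exact le_rfl
    · exact Finset.sum_nonneg fun z _ => mul_nonneg (step_nonneg G r z) (ih z)

lemma sum_fhp (hc : G.Connected) (hV : 1 < Fintype.card V) (x : V) :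
    ∀ (t : ℕ) (r : V), ∑ s ∈ Finset.range (t+1), G.firstHitProb s r x = 1 - Qf G x t r := by
  intro t
  induction t with
  | zero =>
    intro r
    rw [Finset.sum_range_one, fhp_zero, Qf_zero]
    split_ifs <;> norm_num
  | succ t ih =>
    intro r
    rw [Finset.sum_range_succ' (fun s => G.firstHitProb s r x) (t+1)]
    by_cases h : r = x
    · subst h
      simp only [fhp_succ, if_pos rfl, fhp_zero, Qf_self]
      simp
    · simp only [fhp_succ _ _ _ x, if_neg h, fhp_zero, if_neg h, add_zero]
      rw [Finset.sum_comm]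
      have : ∀ z, ∑ s ∈ Finset.range (t+1), G.step r z * G.firstHitProb s z x
          = G.step r z * (1 - Qf G x t z) := by
        intro z; rw [← Finset.mul_sum, ih z]
      rw [Finset.sum_congr rfl fun z _ => this z]
      have hs : ∑ z, G.step r z * (1 - Qf G x t z)
          = ∑ z, G.step r z - ∑ z, G.step r z * Qf G x t z := by
        rw [← Finset.sum_sub_distrib]; congr 1; ext z; ring
      rw [hs, sum_step G (degree_pos G hc hV r), Qf_succ, if_neg h]

lemma fhp_eq_Qf_sub (hc : G.Connected) (hV : 1 < Fintype.card V) (x : V) (t : ℕ) (r : V) :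
    G.firstHitProb (t+1) r x = Qf G x t r - Qf G x (t+1) r := by
  have h1 := sum_fhp G hc hV x t r
  have h2 := sum_fhp G hc hV x (t+1) r
  rw [Finset.sum_range_succ] at h2
  linarith [h1, h2]

lemma Qf_dist_lt_one (hc : G.Connected) (hV : 1 < Fintype.card V) (x : V) :
    ∀ (n : ℕ) (r : V), G.dist r x = n → Qf G x n r < 1 := by
  intro n
  induction n with
  | zero =>
    intro r hr
    have : r = x := (hc.dist_eq_zero_iff).mp hr
    subst this; rw [Qf_self]; norm_num
  | succ n ih =>
    intro r hr
    have hrx : r ≠ x := by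
      intro h; subst h; simp [SimpleGraph.dist_self] at hr
    obtain ⟨z, hadj, hz⟩ := exists_closer G hc hrx
    have hzn : G.dist z x = n := by omega
    have hQz := ih z hzn
    rw [Qf_succ, if_neg hrx]
    have key : ∑ u, G.step r u * Qf G x n u
        = (∑ u ∈ Finset.univ.erase z, G.step r u * Qf G x n u) + G.step r z * Qf G x n z := by
      rw [Finset.sum_erase_add _ _ (Finset.mem_univ z)]
    rw [key]
    have h1 : ∑ u ∈ Finset.univ.erase z, G.step r u * Qf G x n u
        ≤ ∑ u ∈ Finset.univ.erase z, G.step r u :=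
      Finset.sum_le_sum fun u _ => by
        nlinarith [Qf_le_one G hc hV x n u, step_nonneg G r u, Qf_nonneg G x n u]
    have h2 : G.step r z * Qf G x n z < G.step r z * 1 :=
      mul_lt_mul_of_pos_left hQz (step_pos G hadj)
    have h3 : (∑ u ∈ Finset.univ.erase z, G.step r u) + G.step r z * 1 = 1 := by
      rw [mul_one, Finset.sum_erase_add _ _ (Finset.mem_univ z)]
      exact sum_step G (degree_pos G hc hV r)
    linarith

/-- Chapman–Kolmogorov for `avoidProb`. -/
lemma avoidProb_add (x : V) :
    ∀ (s t : ℕ) (r w : V),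
      G.avoidProb x (s + t) r w = ∑ u, G.avoidProb x s r u * G.avoidProb x t u w := by
  intro s
  induction s with
  | zero =>
    intro t r w
    simp only [Nat.zero_add]
    by_cases h : r = x
    · subst h
      rw [avoidProb_self, Finset.sum_eq_zero]
      intro u _
      rw [avoidProb_self, zero_mul]
    · rw [Finset.sum_eq_single r]
      · have : G.avoidProb x 0 r r = 1 := by simp [SimpleGraph.avoidProb, h]
        rw [this, one_mul]
      · intro u _ hu
        have : G.avoidProb x 0 r u = 0 := by simp [SimpleGraph.avoidProb, h, hu.symm]
        rw [this, zero_mul]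
      · simp
  | succ s ih =>
    intro t r w
    have hrw : s + 1 + t = (s + t) + 1 := by omega
    rw [hrw]
    by_cases h : r = x
    · subst h
      rw [avoidProb_self]
      rw [Finset.sum_eq_zero]
      intro u _
      rw [avoidProb_self, zero_mul]
    · simp only [SimpleGraph.avoidProb, if_neg h]
      calc ∑ w1, G.step r w1 * G.avoidProb x (s + t) w1 w
          = ∑ w1, ∑ u, G.step r w1 * (G.avoidProb x s w1 u * G.avoidProb x t u w) := by
            apply Finset.sum_congr rfl; intro w1 _; rw [ih, Finset.mul_sum]
        _ = ∑ u, ∑ w1, G.step r w1 * (G.avoidProb x s w1 u * G.avoidProb x t u w) :=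
            Finset.sum_comm
        _ = ∑ u, (∑ w1, G.step r w1 * G.avoidProb x s w1 u) * G.avoidProb x t u w := by
            apply Finset.sum_congr rfl; intro u _
            rw [Finset.sum_mul]
            apply Finset.sum_congr rfl; intro w1 _; ring
end TreeHitting3
section TreeHitting4

variable {V : Type*} [Fintype V] [DecidableEq V]
variable (G : SimpleGraph V) [DecidableRel G.Adj]

open SimpleGraph Finset Filter

/-- `N`: the maximal distance to `x`. -/
noncomputable def Ndist (x : V) : ℕ := Finset.univ.sup (fun r => G.dist r x)

/-- `ρ`: max over `r` of survival probability up to time `N`. -/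
noncomputable def rhoG [Nonempty V] (x : V) : ℝ :=
  Finset.univ.sup' Finset.univ_nonempty (Qf G x (Ndist G x))

variable [Nonempty V]

lemma Qf_le_rho (x r : V) : Qf G x (Ndist G x) r ≤ rhoG G x :=
  Finset.le_sup' _ (Finset.mem_univ r)

lemma rho_nonneg (x : V) : 0 ≤ rhoG G x := by
  obtain ⟨r⟩ := ‹Nonempty V›
  exact (Qf_nonneg G x (Ndist G x) r).trans (Qf_le_rho G x r)

lemma rho_lt_one (hc : G.Connected) (hV : 1 < Fintype.card V) (x : V) : rhoG G x < 1 := by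
  rw [rhoG, Finset.sup'_lt_iff]
  intro r _
  have h1 : G.dist r x ≤ Ndist G x := Finset.le_sup (f := fun r => G.dist r x) (Finset.mem_univ r)
  exact (Qf_anti G hc hV x h1 r).trans_lt (Qf_dist_lt_one G hc hV x (G.dist r x) r rfl)

lemma Ndist_pos (hc : G.Connected) (hV : 1 < Fintype.card V) (x : V) : 0 < Ndist G x := by
  obtain ⟨r, hr⟩ := Fintype.exists_ne_of_one_lt_card hV x
  have : G.dist r x ≠ 0 := fun h => hr ((hc.dist_eq_zero_iff).mp h)
  have h1 : G.dist r x ≤ Ndist G x := Finset.le_sup (f := fun r => G.dist r x) (Finset.mem_univ r)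
  omega

lemma Qf_add (x : V) (s t : ℕ) (r : V) :
    Qf G x (s + t) r = ∑ u, G.avoidProb x s r u * Qf G x t u := by
  unfold Qf
  calc ∑ w, G.avoidProb x (s + t) r w
      = ∑ w, ∑ u, G.avoidProb x s r u * G.avoidProb x t u w := by
        apply Finset.sum_congr rfl; intro w _; exact avoidProb_add G x s t r w
    _ = ∑ u, ∑ w, G.avoidProb x s r u * G.avoidProb x t u w := Finset.sum_comm
    _ = ∑ u, G.avoidProb x s r u * ∑ w, G.avoidProb x t u w := by
        apply Finset.sum_congr rfl; intro u _; rw [Finset.mul_sum]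

lemma Qf_pow (hc : G.Connected) (hV : 1 < Fintype.card V) (x : V) :
    ∀ (k : ℕ) (r : V), Qf G x (k * Ndist G x) r ≤ rhoG G x ^ k := by
  intro k
  induction k with
  | zero => intro r; simpa using Qf_le_one G hc hV x 0 r
  | succ k ih =>
    intro r
    have hrw : (k+1) * Ndist G x = Ndist G x + k * Ndist G x := by ring
    rw [hrw, Qf_add]
    calc ∑ u, G.avoidProb x (Ndist G x) r u * Qf G x (k * Ndist G x) u
        ≤ ∑ u, G.avoidProb x (Ndist G x) r u * rhoG G x ^ k :=
          Finset.sum_le_sum fun u _ => mul_le_mul_of_nonneg_left (ih u)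
            (avoidProb_nonneg G x _ r u)
      _ = Qf G x (Ndist G x) r * rhoG G x ^ k := by rw [← Finset.sum_mul]; rfl
      _ ≤ rhoG G x * rhoG G x ^ k :=
          mul_le_mul_of_nonneg_right (Qf_le_rho G x r) (pow_nonneg (rho_nonneg G x) k)
      _ = rhoG G x ^ (k+1) := by ring

lemma Qf_le_pow_div (hc : G.Connected) (hV : 1 < Fintype.card V) (x : V) (t : ℕ) (r : V) :
    Qf G x t r ≤ rhoG G x ^ (t / Ndist G x) := by
  have h1 : (t / Ndist G x) * Ndist G x ≤ t := Nat.div_mul_le_self t _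
  exact (Qf_anti G hc hV x h1 r).trans (Qf_pow G hc hV x (t / Ndist G x) r)

lemma sum_pow_div (x : V) (hN : 0 < Ndist G x) :
    ∀ K : ℕ, ∑ s ∈ Finset.range (Ndist G x * K), rhoG G x ^ (s / Ndist G x)
      = (Ndist G x : ℝ) * ∑ k ∈ Finset.range K, rhoG G x ^ k := by
  set N := Ndist G x
  intro K
  induction K with
  | zero => simp
  | succ K ih =>
    have hrw : N * (K + 1) = N * K + N := by ring
    rw [hrw, Finset.range_eq_Ico,
      ← Finset.sum_Ico_consecutive (fun s => rhoG G x ^ (s / N)) (Nat.zero_le (N*K))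
        (by omega), ← Finset.range_eq_Ico, ih]
    have hconst : ∀ s ∈ Finset.Ico (N*K) (N*K+N), rhoG G x ^ (s / N) = rhoG G x ^ K := by
      intro s hs
      rw [Finset.mem_Ico] at hs
      congr 1
      have h1 : K * N ≤ s := by rw [Nat.mul_comm]; exact hs.1
      have h2 : s < (K+1) * N := by
        have h3 : N * K + N = (K+1) * N := by ring
        omega
      exact Nat.div_eq_of_lt_le h1 h2
    rw [Finset.sum_congr rfl hconst, Finset.sum_const, Nat.card_Ico]
    have h4 : N * K + N - N * K = N := by omega
    rw [h4, nsmul_eq_mul, Finset.sum_range_succ]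
    ring

end TreeHitting4
section TreeHitting5

variable {V : Type*} [Fintype V] [DecidableEq V]
variable (G : SimpleGraph V) [DecidableRel G.Adj] [Nonempty V]

open SimpleGraph Finset Filter

lemma sum_Qf_le (hc : G.Connected) (hV : 1 < Fintype.card V) (x : V) (T : ℕ) (r : V) :
    ∑ s ∈ Finset.range T, Qf G x s r ≤ (Ndist G x : ℝ) * (1 - rhoG G x)⁻¹ := by
  set N := Ndist G x with hNdef
  have hN : 0 < N := Ndist_pos G hc hV x
  have hrho0 := rho_nonneg G x
  have hrho1 := rho_lt_one G hc hV x
  calc ∑ s ∈ Finset.range T, Qf G x s r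
      ≤ ∑ s ∈ Finset.range T, rhoG G x ^ (s / N) :=
        Finset.sum_le_sum fun s _ => Qf_le_pow_div G hc hV x s r
    _ ≤ ∑ s ∈ Finset.range (N * T), rhoG G x ^ (s / N) := by
        apply Finset.sum_le_sum_of_subset_of_nonneg
        · apply Finset.range_subset_range.mpr; nlinarith [hN]
        · intro s _ _; positivity
    _ = (N : ℝ) * ∑ k ∈ Finset.range T, rhoG G x ^ k := sum_pow_div G x hN T
    _ ≤ (N : ℝ) * (1 - rhoG G x)⁻¹ := by
        apply mul_le_mul_of_nonneg_left _ (by positivity)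
        calc ∑ k ∈ Finset.range T, rhoG G x ^ k
            ≤ ∑' k : ℕ, rhoG G x ^ k := Summable.sum_le_tsum _ (fun k _ => by positivity)
              (summable_geometric_of_lt_one hrho0 hrho1)
          _ = (1 - rhoG G x)⁻¹ := tsum_geometric_of_lt_one hrho0 hrho1

lemma abel_identity (hc : G.Connected) (hV : 1 < Fintype.card V) (x : V) (r : V) :
    ∀ T : ℕ, ∑ t ∈ Finset.range (T+1), (t : ℝ) * G.firstHitProb t r x
      = ∑ s ∈ Finset.range T, Qf G x s r - (T : ℝ) * Qf G x T r := by
  intro T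
  induction T with
  | zero => simp
  | succ T ih =>
    rw [Finset.sum_range_succ _ (T+1), ih, fhp_eq_Qf_sub G hc hV x T r,
      Finset.sum_range_succ _ T]
    push_cast
    ring

lemma summable_mul_fhp (hc : G.Connected) (hV : 1 < Fintype.card V) (x : V) (r : V) :
    Summable (fun t : ℕ => (t : ℝ) * G.firstHitProb t r x) := by
  apply summable_of_sum_range_le (c := (Ndist G x : ℝ) * (1 - rhoG G x)⁻¹)
  · intro t; exact mul_nonneg (by positivity) (fhp_nonneg G x t r)
  · intro n
    match n with
    | 0 =>
      simp only [Finset.range_zero, Finset.sum_empty]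
      have h0 := rho_lt_one G hc hV x
      exact mul_nonneg (Nat.cast_nonneg _) (inv_nonneg.mpr (by linarith))
    | T + 1 =>
      rw [abel_identity G hc hV x r T]
      have h1 : 0 ≤ (T : ℝ) * Qf G x T r := mul_nonneg (by positivity) (Qf_nonneg G x T r)
      linarith [sum_Qf_le G hc hV x T r]

lemma summable_fhp (hc : G.Connected) (hV : 1 < Fintype.card V) (x : V) (r : V) :
    Summable (fun t : ℕ => G.firstHitProb t r x) := by
  apply summable_of_sum_range_le (c := (1 : ℝ))
  · intro t; exact fhp_nonneg G x t r
  · intro n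
    match n with
    | 0 => simp
    | T + 1 =>
      rw [sum_fhp G hc hV x T r]
      linarith [Qf_nonneg G x T r]

lemma tendsto_Qf (hc : G.Connected) (hV : 1 < Fintype.card V) (x : V) (r : V) :
    Tendsto (fun T : ℕ => Qf G x T r) atTop (nhds 0) := by
  have hN : 0 < Ndist G x := Ndist_pos G hc hV x
  have hdiv : Tendsto (fun T : ℕ => T / Ndist G x) atTop atTop := by
    apply Filter.tendsto_atTop_atTop.mpr
    intro b
    refine ⟨b * Ndist G x + Ndist G x, fun a ha => ?_⟩
    rw [Nat.le_div_iff_mul_le hN]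
    omega
  have hpow : Tendsto (fun T : ℕ => rhoG G x ^ (T / Ndist G x)) atTop (nhds 0) :=
    (tendsto_pow_atTop_nhds_zero_of_lt_one (rho_nonneg G x) (rho_lt_one G hc hV x)).comp hdiv
  exact squeeze_zero (fun T => Qf_nonneg G x T r) (fun T => Qf_le_pow_div G hc hV x T r) hpow

lemma tsum_fhp (hc : G.Connected) (hV : 1 < Fintype.card V) (x : V) (r : V) :
    ∑' t : ℕ, G.firstHitProb t r x = 1 := by
  have hs : HasSum (fun t : ℕ => G.firstHitProb t r x) 1 := by
    rw [hasSum_iff_tendsto_nat_of_nonneg (fun t => fhp_nonneg G x t r)]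
    rw [← Filter.tendsto_add_atTop_iff_nat 1]
    have heq : (fun T : ℕ => ∑ s ∈ Finset.range (T+1), G.firstHitProb s r x)
        = fun T : ℕ => 1 - Qf G x T r := by
      funext T; exact sum_fhp G hc hV x T r
    rw [heq]
    simpa using (tendsto_Qf G hc hV x r).const_sub 1
  exact hs.tsum_eq

end TreeHitting5
section TreeHitting6

variable {V : Type*} [Fintype V] [DecidableEq V]
variable (G : SimpleGraph V) [DecidableRel G.Adj] [Nonempty V]

open SimpleGraph Finset Filter

lemma hitTime_self (x : V) : G.hitTime x x = 0 := by
  unfold SimpleGraph.hitTime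
  rw [show (fun t : ℕ => (t : ℝ) * G.firstHitProb t x x) = fun _ => (0:ℝ) from ?_, tsum_zero]
  funext t
  match t with
  | 0 => simp
  | t + 1 => rw [fhp_succ, if_pos rfl, mul_zero]

lemma hitTime_rec (hc : G.Connected) (hV : 1 < Fintype.card V) (x : V) {r : V} (h : r ≠ x) :
    G.hitTime r x = 1 + ∑ z, G.step r z * G.hitTime z x := by
  have hsum : ∀ z, Summable (fun t : ℕ => ((t:ℝ)+1) * G.firstHitProb t z x) := by
    intro z
    have h1 := summable_mul_fhp G hc hV x z
    have h2 := summable_fhp G hc hV x z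
    have h3 := h1.add h2
    apply h3.congr
    intro t; ring
  have key : ∀ z, ∑' t : ℕ, ((t:ℝ)+1) * G.firstHitProb t z x = G.hitTime z x + 1 := by
    intro z
    rw [show (fun t : ℕ => ((t:ℝ)+1) * G.firstHitProb t z x)
        = fun t : ℕ => (t:ℝ) * G.firstHitProb t z x + G.firstHitProb t z x by funext t; ring]
    rw [Summable.tsum_add (summable_mul_fhp G hc hV x z) (summable_fhp G hc hV x z),
      tsum_fhp G hc hV x z]
    rfl
  unfold SimpleGraph.hitTime
  rw [Summable.tsum_eq_zero_add (summable_mul_fhp G hc hV x r)]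
  simp only [Nat.cast_zero, zero_mul, zero_add]
  have hmid : (fun t : ℕ => (((t+1 : ℕ)) : ℝ) * G.firstHitProb (t+1) r x)
      = fun t : ℕ => ∑ z, G.step r z * (((t:ℝ)+1) * G.firstHitProb t z x) := by
    funext t
    rw [fhp_succ, if_neg h, Finset.mul_sum]
    apply Finset.sum_congr rfl
    intro z _
    push_cast
    ring
  rw [hmid]
  rw [Summable.tsum_finsetSum (fun z _ => (hsum z).mul_left (G.step r z))]
  have hz : ∀ z, ∑' t : ℕ, G.step r z * (((t:ℝ)+1) * G.firstHitProb t z x)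
      = G.step r z * (G.hitTime z x + 1) := by
    intro z
    rw [Summable.tsum_mul_left _ (hsum z), key z]
  rw [Finset.sum_congr rfl fun z _ => hz z]
  have : ∑ z, G.step r z * (G.hitTime z x + 1)
      = ∑ z, G.step r z * G.hitTime z x + ∑ z, G.step r z := by
    rw [← Finset.sum_add_distrib]
    apply Finset.sum_congr rfl
    intro z _; ring
  rw [this, sum_step G (degree_pos G hc hV r)]
  unfold SimpleGraph.hitTime
  ring

lemma harmonic_le (hc : G.Connected) (hV : 1 < Fintype.card V) (x : V) (g : V → ℝ)
    (hx : g x = 0) (hg : ∀ r, r ≠ x → g r = ∑ z, G.step r z * g z) : ∀ r, g r ≤ 0 := by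
  have hne : (Finset.univ : Finset V).Nonempty := Finset.univ_nonempty
  set M := Finset.univ.sup' hne g with hM
  have hle : ∀ r, g r ≤ M := fun r => Finset.le_sup' g (Finset.mem_univ r)
  have aux : ∀ n r, G.dist r x = n → g r = M → M = 0 := by
    intro n
    induction n with
    | zero =>
      intro r h0 hgr
      have hr : r = x := hc.dist_eq_zero_iff.mp h0
      subst hr; rw [← hgr, hx]
    | succ n ih =>
      intro r h0 hgr
      have hrx : r ≠ x := by
        intro hh; subst hh; simp [SimpleGraph.dist_self] at h0
      have h2 : ∑ z, G.step r z * M = M := by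
        rw [← Finset.sum_mul, sum_step G (degree_pos G hc hV r), one_mul]
      have hsum0 : ∑ z, G.step r z * (M - g z) = 0 := by
        have h3 : ∑ z, G.step r z * (M - g z)
            = ∑ z, G.step r z * M - ∑ z, G.step r z * g z := by
          rw [← Finset.sum_sub_distrib]
          apply Finset.sum_congr rfl; intro z _; ring
        rw [h3, h2, ← hg r hrx, hgr]; ring
      have hall := (Finset.sum_eq_zero_iff_of_nonneg
        (fun z _ => mul_nonneg (step_nonneg G r z) (by linarith [hle z]))).mp hsum0
      obtain ⟨z, hadj, hdz⟩ := exists_closer G hc hrx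
      have hgz : g z = M := by
        have h4 := hall z (Finset.mem_univ z)
        have hpos := step_pos G hadj
        rcases mul_eq_zero.mp h4 with h5 | h5
        · linarith
        · linarith
      exact ih z (by omega) hgz
  obtain ⟨r0, -, hr0⟩ := Finset.exists_mem_eq_sup' hne g
  have hM0 : M = 0 := aux (G.dist r0 x) r0 rfl hr0.symm
  intro r; linarith [hle r]

lemma harmonic_unique (hc : G.Connected) (hV : 1 < Fintype.card V) (x : V) (g : V → ℝ)
    (hx : g x = 0) (hg : ∀ r, r ≠ x → g r = ∑ z, G.step r z * g z) : ∀ r, g r = 0 := by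
  have h1 := harmonic_le G hc hV x g hx hg
  have h2 : ∀ r, -g r ≤ 0 := by
    apply harmonic_le G hc hV x (fun r => -g r) (by simp [hx])
    intro r hr
    simp only [mul_neg]
    rw [Finset.sum_neg_distrib, ← hg r hr]
  intro r
  have := h1 r; have := h2 r; linarith

lemma hitTime_eq_of (hc : G.Connected) (hV : 1 < Fintype.card V) (x : V) (h : V → ℝ)
    (hx : h x = 0) (hrec : ∀ r, r ≠ x → h r = 1 + ∑ z, G.step r z * h z) (r : V) :
    G.hitTime r x = h r := by
  have hmain := harmonic_unique G hc hV x (fun u => G.hitTime u x - h u)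
    (by simp [hitTime_self, hx]) ?_ r
  · linarith [hmain]
  · intro u hu
    have hsub : ∑ z, G.step u z * (G.hitTime z x - h z)
        = ∑ z, G.step u z * G.hitTime z x - ∑ z, G.step u z * h z := by
      rw [← Finset.sum_sub_distrib]
      apply Finset.sum_congr rfl; intro z _; ring
    rw [hsub, hitTime_rec G hc hV x hu, hrec u hu]
    ring

end TreeHitting6
section TreeHitting7

variable {V : Type*} [Fintype V] [DecidableEq V]
variable (T : SimpleGraph V) [DecidableRel T.Adj]

open SimpleGraph Finset

lemma tree_path_length (hT : T.IsTree) {u v : V} (p : T.Walk u v) (hp : p.IsPath) :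
    p.length = T.dist u v := by
  obtain ⟨q, hq, hl⟩ := hT.isConnected.exists_path_of_dist u v
  obtain ⟨pp, hpp, huniq⟩ := hT.existsUnique_path u v
  have hpq : p = q := (huniq p hp).trans (huniq q hq).symm
  rw [hpq, hl]

lemma tree_split_dist (hT : T.IsTree) {z v : V} (p : T.Walk z v) (hp : p.IsPath)
    {r : V} (hr : r ∈ p.support) : p.length = T.dist z r + T.dist r v := by
  have h1 : (p.takeUntil r hr).length = T.dist z r :=
    tree_path_length T hT _ (hp.takeUntil hr)
  have h2 : (p.dropUntil r hr).length = T.dist r v :=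
    tree_path_length T hT _ (hp.dropUntil hr)
  have h3 : (p.takeUntil r hr).length + (p.dropUntil r hr).length = p.length := by
    rw [← SimpleGraph.Walk.length_append, SimpleGraph.Walk.take_spec]
  omega

lemma tree_adj_dist (hT : T.IsTree) {r z : V} (hadj : T.Adj r z) (v : V) :
    T.dist z v + 1 = T.dist r v ∨ T.dist r v + 1 = T.dist z v := by
  obtain ⟨p, hp, hl⟩ := hT.isConnected.exists_path_of_dist z v
  by_cases hr : r ∈ p.support
  · right
    have h1 := tree_split_dist T hT p hp hr
    have h4 : T.dist z r = 1 := SimpleGraph.dist_eq_one_iff_adj.mpr hadj.symm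
    omega
  · left
    have hq : (SimpleGraph.Walk.cons hadj p).IsPath := hp.cons hr
    have h5 := tree_path_length T hT _ hq
    rw [SimpleGraph.Walk.length_cons] at h5
    omega

lemma tree_closer_unique (hT : T.IsTree) {r v : V} (hrv : r ≠ v) {z1 z2 : V}
    (h1 : T.Adj r z1) (hd1 : T.dist z1 v + 1 = T.dist r v)
    (h2 : T.Adj r z2) (hd2 : T.dist z2 v + 1 = T.dist r v) : z1 = z2 := by
  have build : ∀ z : V, T.Adj r z → T.dist z v + 1 = T.dist r v →
      ∃ (p : T.Walk z v), p.IsPath ∧ r ∉ p.support := by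
    intro z hz hd
    obtain ⟨p, hp, hl⟩ := hT.isConnected.exists_path_of_dist z v
    refine ⟨p, hp, ?_⟩
    intro hr
    have := tree_split_dist T hT p hp hr
    have h4 : T.dist z r = 1 := SimpleGraph.dist_eq_one_iff_adj.mpr hz.symm
    omega
  obtain ⟨p1, hp1', hr1⟩ := build z1 h1 hd1
  obtain ⟨p2, hp2', hr2⟩ := build z2 h2 hd2
  have hp1 : (SimpleGraph.Walk.cons h1 p1).IsPath := hp1'.cons hr1
  have hp2 : (SimpleGraph.Walk.cons h2 p2).IsPath := hp2'.cons hr2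
  obtain ⟨pp, hpp, huniq⟩ := hT.existsUnique_path r v
  have heq : SimpleGraph.Walk.cons h1 p1 = SimpleGraph.Walk.cons h2 p2 :=
    (huniq _ hp1).trans (huniq _ hp2).symm
  have hsup := congrArg SimpleGraph.Walk.support heq
  rw [SimpleGraph.Walk.support_cons, SimpleGraph.Walk.support_cons] at hsup
  have hsup2 : p1.support = p2.support := by injection hsup
  have ha : p1.support = z1 :: p1.support.tail := p1.support_eq_cons
  have hb : p2.support = z2 :: p2.support.tail := p2.support_eq_cons
  rw [ha, hb] at hsup2
  injection hsup2

lemma tree_sum_dist_neighbors (hT : T.IsTree) {r v : V} (hrv : r ≠ v) :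
    ∑ z ∈ T.neighborFinset r, (T.dist z v : ℝ)
      = (T.degree r : ℝ) * (T.dist r v : ℝ) + (T.degree r : ℝ) - 2 := by
  obtain ⟨z0, hz0, hd0⟩ := exists_closer T hT.isConnected hrv
  have hz0mem : z0 ∈ T.neighborFinset r := (SimpleGraph.mem_neighborFinset T r z0).mpr hz0
  rw [← Finset.sum_erase_add _ _ hz0mem]
  have hfar : ∀ z ∈ (T.neighborFinset r).erase z0,
      (T.dist z v : ℝ) = (T.dist r v : ℝ) + 1 := by
    intro z hz
    rw [Finset.mem_erase, SimpleGraph.mem_neighborFinset] at hz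
    rcases tree_adj_dist T hT hz.2 v with h | h
    · exact absurd (tree_closer_unique T hT hrv hz.2 h hz0 hd0) hz.1
    · exact_mod_cast congrArg (fun k : ℕ => (k : ℝ)) h.symm
  rw [Finset.sum_congr rfl hfar, Finset.sum_const, Finset.card_erase_of_mem hz0mem,
    T.card_neighborFinset_eq_degree]
  have hdeg : 1 ≤ T.degree r := by
    have := Finset.card_pos.mpr ⟨z0, hz0mem⟩
    rw [T.card_neighborFinset_eq_degree] at this
    omega
  have hc0 : (T.dist z0 v : ℝ) = (T.dist r v : ℝ) - 1 := by
    have h6 : ((T.dist z0 v : ℕ) : ℝ) + 1 = ((T.dist r v : ℕ) : ℝ) := by exact_mod_cast hd0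
    linarith
  have hcast : ((T.degree r - 1 : ℕ) : ℝ) = (T.degree r : ℝ) - 1 := by
    push_cast [hdeg]; ring
  rw [hc0, nsmul_eq_mul, hcast]
  ring

/-- Candidate formula for the hitting time of `x` in a tree. -/
noncomputable def cand (x u : V) : ℝ :=
  ((Fintype.card V : ℝ) - 1) * (T.dist u x : ℝ)
    + (∑ w, (T.dist x w : ℝ)) - ∑ w, (T.dist u w : ℝ)

lemma cand_self (x : V) : cand T x x = 0 := by
  unfold cand
  rw [SimpleGraph.dist_self]
  push_cast
  ring

lemma cand_rec (hT : T.IsTree) (hV : 1 < Fintype.card V) (x : V) {r : V} (h : r ≠ x) :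
    cand T x r = 1 + ∑ z, T.step r z * cand T x z := by
  have hc := hT.isConnected
  have hdeg := degree_pos T hc hV r
  have hDpos : (0:ℝ) < (T.degree r : ℝ) := by exact_mod_cast hdeg
  have hstep : ∑ z, T.step r z * cand T x z
      = ((T.degree r : ℝ))⁻¹ * ∑ z ∈ T.neighborFinset r, cand T x z := by
    rw [Finset.mul_sum, neighborFinset_eq_filter, Finset.sum_filter]
    apply Finset.sum_congr rfl
    intro z _
    unfold SimpleGraph.step
    split_ifs <;> simp
  have hsplit : ∑ z ∈ T.neighborFinset r, cand T x z
      = ((Fintype.card V : ℝ) - 1) * (∑ z ∈ T.neighborFinset r, (T.dist z x : ℝ))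
        + (T.degree r : ℝ) * (∑ w, (T.dist x w : ℝ))
        - ∑ z ∈ T.neighborFinset r, ∑ w, (T.dist z w : ℝ) := by
    unfold cand
    rw [Finset.sum_sub_distrib, Finset.sum_add_distrib, ← Finset.mul_sum, Finset.sum_const,
      T.card_neighborFinset_eq_degree, nsmul_eq_mul]
  have S1 : ∑ z ∈ T.neighborFinset r, (T.dist z x : ℝ)
      = (T.degree r : ℝ) * (T.dist r x : ℝ) + (T.degree r : ℝ) - 2 :=
    tree_sum_dist_neighbors T hT h
  have hcard : ((Finset.univ.erase r).card : ℝ) = (Fintype.card V : ℝ) - 1 := by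
    rw [Finset.card_erase_of_mem (Finset.mem_univ r), Finset.card_univ,
      Nat.cast_sub (by omega)]
    norm_num
  have herase : ∑ w ∈ Finset.univ.erase r, (T.dist r w : ℝ) = ∑ w, (T.dist r w : ℝ) := by
    conv_rhs => rw [← Finset.sum_erase_add Finset.univ _ (Finset.mem_univ r)]
    rw [SimpleGraph.dist_self]
    simp
  have S2 : ∑ z ∈ T.neighborFinset r, ∑ w, (T.dist z w : ℝ)
      = (T.degree r : ℝ) * (∑ w, (T.dist r w : ℝ))
        + ((Fintype.card V : ℝ) - 1) * ((T.degree r : ℝ) - 2) + (T.degree r : ℝ) := by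
    rw [Finset.sum_comm, ← Finset.sum_erase_add _ _ (Finset.mem_univ r)]
    have hr0 : ∑ z ∈ T.neighborFinset r, (T.dist z r : ℝ) = (T.degree r : ℝ) := by
      have h1 : ∀ z ∈ T.neighborFinset r, (T.dist z r : ℝ) = 1 := by
        intro z hz
        rw [SimpleGraph.mem_neighborFinset] at hz
        have h2 : T.dist z r = 1 := SimpleGraph.dist_eq_one_iff_adj.mpr hz.symm
        exact_mod_cast congrArg (fun k : ℕ => (k : ℝ)) h2
      rw [Finset.sum_congr rfl h1, Finset.sum_const, T.card_neighborFinset_eq_degree,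
        nsmul_eq_mul, mul_one]
    have hw : ∀ w ∈ Finset.univ.erase r,
        ∑ z ∈ T.neighborFinset r, (T.dist z w : ℝ)
          = (T.degree r : ℝ) * (T.dist r w : ℝ) + (T.degree r : ℝ) - 2 := by
      intro w hwm
      rw [Finset.mem_erase] at hwm
      exact tree_sum_dist_neighbors T hT (Ne.symm hwm.1)
    rw [hr0, Finset.sum_congr rfl hw, Finset.sum_sub_distrib, Finset.sum_add_distrib,
      ← Finset.mul_sum, Finset.sum_const, Finset.sum_const, herase, nsmul_eq_mul,
      nsmul_eq_mul, hcard]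
    ring
  have hD0 : (T.degree r : ℝ) ≠ 0 := ne_of_gt hDpos
  rw [hstep, hsplit, S1, S2]
  unfold cand
  field_simp
  ring

end TreeHitting7
/-- For every finite tree `T` and vertex `r`,
`∑_v (H_r(v) + d(r,v)) = 2 W(T)`, i.e. `CC_r(T) + ∑_v d(r,v) = 2 W(T)`. -/
theorem tree_CoverCost_wiener {V : Type*} [Fintype V] [DecidableEq V]
    (T : SimpleGraph V) [DecidableRel T.Adj] (hT : T.IsTree) (r : V) :
    ∑ v : V, (T.hitTime r v + (T.dist r v : ℝ)) = 2 * wienerIndex T := by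
  haveI : Nonempty V := hT.isConnected.nonempty
  rcases le_or_gt (Fintype.card V) 1 with hV | hV
  · haveI : Subsingleton V := Fintype.card_le_one_iff_subsingleton.mp hV
    have h1 : ∀ v : V, T.hitTime r v + (T.dist r v : ℝ) = 0 := by
      intro v
      rw [Subsingleton.elim v r, hitTime_self T r, SimpleGraph.dist_self]
      norm_num
    have h2 : ∀ x y : V, (T.dist x y : ℝ) = 0 := by
      intro x y
      rw [Subsingleton.elim x y, SimpleGraph.dist_self]
      norm_num
    rw [Finset.sum_congr rfl fun v _ => h1 v, Finset.sum_const]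
    unfold wienerIndex
    simp [h2]
  · have key : ∀ v : V, T.hitTime r v = cand T v r :=
      fun v => hitTime_eq_of T hT.isConnected hV v (cand T v) (cand_self T v)
        (fun u hu => cand_rec T hT hV v hu) r
    have expand : ∀ v, T.hitTime r v + (T.dist r v : ℝ)
        = (Fintype.card V : ℝ) * (T.dist r v : ℝ)
          + ∑ w, (T.dist v w : ℝ) - ∑ w, (T.dist r w : ℝ) := by
      intro v
      rw [key v]
      unfold cand
      ring
    rw [Finset.sum_congr rfl fun v _ => expand v, Finset.sum_sub_distrib,
      Finset.sum_add_distrib, ← Finset.mul_sum, Finset.sum_const, Finset.card_univ,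
      nsmul_eq_mul]
    unfold wienerIndex
    ring
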